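/- For x ≠ y in ℝ² and λ > 0, the Yukawa Green's function G(x,y) = −(1/(2π))K₀(λ‖x−y‖) satisfies (Δₓ − λ²)G(x,y) = 0. -/

import Mathlib

open Real MeasureTheory

/-- Modified Bessel function of the second kind of order zero,
via the integral representation `K₀(x) = ∫₀^∞ exp(-x cosh t) dt`. -/
noncomputable def K0 (x : ℝ) : ℝ :=
  ∫ t in Set.Ioi (0 : ℝ), Real.exp (-x * Real.cosh t)

/-- Modified Bessel function of the second kind of order one,
via the integral representation `K₁(x) = ∫₀^∞ exp(-x cosh t) cosh t dt`. -/
noncomputable def K1 (x : ℝ) : ℝ :=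
  ∫ t in Set.Ioi (0 : ℝ), Real.exp (-x * Real.cosh t) * Real.cosh t

/-- Euclidean distance on `ℝ × ℝ`. -/
noncomputable def dist2 (x y : ℝ × ℝ) : ℝ :=
  Real.sqrt ((x.1 - y.1) ^ 2 + (x.2 - y.2) ^ 2)

/-- First partial derivative. -/
noncomputable def pd1 (f : ℝ × ℝ → ℝ) (p : ℝ × ℝ) : ℝ :=
  deriv (fun t => f (t, p.2)) p.1

/-- Second partial derivative. -/
noncomputable def pd2 (f : ℝ × ℝ → ℝ) (p : ℝ × ℝ) : ℝ :=
  deriv (fun t => f (p.1, t)) p.2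

/-- Laplacian on `ℝ²`. -/
noncomputable def lap (f : ℝ × ℝ → ℝ) (p : ℝ × ℝ) : ℝ :=
  pd1 (pd1 f) p + pd2 (pd2 f) p

lemma cosh_ge_sq (t : ℝ) : t ^ 2 / 4 ≤ Real.cosh t := by
  have h1 := Real.quadratic_le_exp_of_nonneg (abs_nonneg t)
  have h2 := Real.exp_pos (-|t|)
  have h3 : Real.cosh t = (Real.exp |t| + Real.exp (-|t|)) / 2 := by
    rw [← Real.cosh_abs, Real.cosh_eq]
  have h4 : |t| ^ 2 = t ^ 2 := sq_abs t
  nlinarith [abs_nonneg t]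

lemma pow_div_fact_le_exp {z : ℝ} (hz : 0 ≤ z) (n : ℕ) : z ^ n / n.factorial ≤ Real.exp z := by
  calc z ^ n / n.factorial ≤ ∑ i ∈ Finset.range (n+1), z ^ i / i.factorial := by
        refine Finset.single_le_sum (f := fun i => z ^ i / (i.factorial : ℝ)) ?_ (Finset.self_mem_range_succ n)
        intro i _
        positivity
    _ ≤ Real.exp z := Real.sum_le_exp_of_nonneg hz _

noncomputable def Kint (n : ℕ) (x : ℝ) : ℝ :=
  ∫ t in Set.Ioi (0 : ℝ), Real.exp (-x * Real.cosh t) * Real.cosh t ^ n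

lemma key_bound (n : ℕ) {x : ℝ} (hx : 0 < x) {x' : ℝ} (hx' : x / 2 ≤ x') (t : ℝ) :
    Real.exp (-x' * Real.cosh t) * Real.cosh t ^ n
      ≤ (n.factorial * (4 / x) ^ n) * Real.exp (-(x / 16) * t ^ 2) := by
  set c := Real.cosh t with hc
  have hc1 : (1 : ℝ) ≤ c := Real.one_le_cosh t
  have hc0 : (0 : ℝ) < c := lt_of_lt_of_le one_pos hc1
  have h1 : c ^ n ≤ n.factorial * (4 / x) ^ n * Real.exp (x / 4 * c) := by
    have h := pow_div_fact_le_exp (mul_nonneg (by positivity : (0:ℝ) ≤ x / 4) hc0.le) n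
    have e1 : c ^ n = (4 / x) ^ n * (x / 4 * c) ^ n := by
      rw [mul_pow, ← mul_assoc, ← mul_pow]
      field_simp
      simp
    rw [e1]
    rw [div_le_iff₀ (by positivity : (0:ℝ) < (n.factorial : ℝ))] at h
    calc (4 / x) ^ n * (x / 4 * c) ^ n ≤ (4 / x) ^ n * (Real.exp (x / 4 * c) * n.factorial) :=
          mul_le_mul_of_nonneg_left h (by positivity)
      _ = n.factorial * (4 / x) ^ n * Real.exp (x / 4 * c) := by ring
  have h2 : Real.exp (-x' * c) * Real.exp (x / 4 * c) ≤ Real.exp (-(x / 16) * t ^ 2) := by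
    rw [← Real.exp_add]
    apply Real.exp_le_exp.2
    have := cosh_ge_sq t
    nlinarith
  calc Real.exp (-x' * c) * c ^ n
      ≤ Real.exp (-x' * c) * (n.factorial * (4 / x) ^ n * Real.exp (x / 4 * c)) :=
        mul_le_mul_of_nonneg_left h1 (Real.exp_pos _).le
    _ = (n.factorial * (4 / x) ^ n) * (Real.exp (-x' * c) * Real.exp (x / 4 * c)) := by ring
    _ ≤ (n.factorial * (4 / x) ^ n) * Real.exp (-(x / 16) * t ^ 2) :=
        mul_le_mul_of_nonneg_left h2 (by positivity)

lemma integrable_bound {x : ℝ} (hx : 0 < x) (C : ℝ) :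
    Integrable (fun t => C * Real.exp (-(x / 16) * t ^ 2)) (volume.restrict (Set.Ioi (0:ℝ))) := by
  exact ((integrable_exp_neg_mul_sq (by positivity : (0:ℝ) < x / 16)).const_mul C).integrableOn

lemma cont_integrand (n : ℕ) (x : ℝ) :
    Continuous (fun t => Real.exp (-x * Real.cosh t) * Real.cosh t ^ n) := by
  fun_prop

lemma integrable_Kint (n : ℕ) {x : ℝ} (hx : 0 < x) :
    Integrable (fun t => Real.exp (-x * Real.cosh t) * Real.cosh t ^ n)
      (volume.restrict (Set.Ioi (0:ℝ))) := by
  apply Integrable.mono' (integrable_bound hx (n.factorial * (4 / x) ^ n))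
    (cont_integrand n x).aestronglyMeasurable
  refine Filter.Eventually.of_forall fun t => ?_
  rw [Real.norm_eq_abs, abs_of_nonneg (by positivity)]
  exact key_bound n hx (by linarith) t

lemma hasDerivAt_Kint (n : ℕ) {x : ℝ} (hx : 0 < x) :
    HasDerivAt (Kint n) (-(Kint (n+1) x)) x := by
  have main := hasDerivAt_integral_of_dominated_loc_of_deriv_le
    (μ := volume.restrict (Set.Ioi (0:ℝ)))
    (F := fun x t => Real.exp (-x * Real.cosh t) * Real.cosh t ^ n)
    (F' := fun x t => -(Real.exp (-x * Real.cosh t) * Real.cosh t ^ (n+1)))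
    (x₀ := x)
    (bound := fun t => (n+1).factorial * (4 / x) ^ (n+1) * Real.exp (-(x / 16) * t ^ 2))
    (Metric.ball_mem_nhds x (half_pos hx))
    (Filter.Eventually.of_forall fun x' => (cont_integrand n x').aestronglyMeasurable)
    (integrable_Kint n hx)
    ((cont_integrand (n+1) x).neg.aestronglyMeasurable)
    ?_ (integrable_bound hx _) ?_
  · have : (∫ t in Set.Ioi (0:ℝ), -(Real.exp (-x * Real.cosh t) * Real.cosh t ^ (n+1)))
        = -(Kint (n+1) x) := by
      rw [integral_neg]; rfl
    rw [this] at main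
    exact main.2
  · refine Filter.Eventually.of_forall fun t => fun x' hx' => ?_
    rw [Real.norm_eq_abs, abs_neg, abs_of_nonneg (by positivity)]
    have : x / 2 ≤ x' := by
      have := abs_lt.1 (mem_ball_iff_norm.1 hx')
      linarith [this.1]
    exact key_bound (n+1) hx this t
  · refine Filter.Eventually.of_forall fun t => fun x' _ => ?_
    have h : HasDerivAt (fun x : ℝ => -x * Real.cosh t) (-Real.cosh t) x' := by
      simpa using ((hasDerivAt_id x').neg.mul_const (Real.cosh t))
    have h2 := (h.exp).mul_const (Real.cosh t ^ n)
    refine h2.congr_deriv (Eq.symm ?_)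
    simp only [pow_succ]
    ring

lemma abs_sinh_le_cosh (t : ℝ) : |Real.sinh t| ≤ Real.cosh t := by
  rw [Real.abs_sinh, ← Real.cosh_abs]
  exact le_of_lt (Real.sinh_lt_cosh _)

lemma tendsto_gauss {x : ℝ} (hx : 0 < x) (C : ℝ) :
    Filter.Tendsto (fun t : ℝ => C * Real.exp (-(x / 16) * t ^ 2)) Filter.atTop (nhds 0) := by
  have h1 : Filter.Tendsto (fun t : ℝ => -(x / 16) * t ^ 2) Filter.atTop Filter.atBot := by
    have h2 : Filter.Tendsto (fun t : ℝ => (x / 16) * t ^ 2) Filter.atTop Filter.atTop :=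
      (Filter.tendsto_pow_atTop two_ne_zero).const_mul_atTop (by positivity)
    have h3 := Filter.tendsto_neg_atTop_atBot.comp h2
    convert h3 using 2 with t
    simp [Function.comp]
  have := (Real.tendsto_exp_atBot.comp h1).const_mul C
  simpa using this

lemma Kint_ibp {x : ℝ} (hx : 0 < x) : Kint 2 x = Kint 0 x + Kint 1 x / x := by
  set f : ℝ → ℝ := fun t => -(1/x) * (Real.exp (-x * Real.cosh t) * Real.sinh t) with hf
  set f' : ℝ → ℝ := fun t => (Real.exp (-x * Real.cosh t) * Real.cosh t ^ 2
      - Real.exp (-x * Real.cosh t) * Real.cosh t ^ 0)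
      - (1/x) * (Real.exp (-x * Real.cosh t) * Real.cosh t ^ 1) with hf'
  have hderiv : ∀ t : ℝ, HasDerivAt f (f' t) t := by
    intro t
    have h1 : HasDerivAt (fun t : ℝ => -x * Real.cosh t) (-x * Real.sinh t) t :=
      (Real.hasDerivAt_cosh t).const_mul (-x)
    have h2 := (h1.exp.mul (Real.hasDerivAt_sinh t)).const_mul (-(1/x))
    refine h2.congr_deriv (Eq.symm ?_)
    have hs := Real.sinh_sq t
    rw [hf']
    field_simp
    linear_combination (-x) * hs
  have f'int : IntegrableOn f' (Set.Ioi (0:ℝ)) :=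
    ((integrable_Kint 2 hx).sub (integrable_Kint 0 hx)).sub
      ((integrable_Kint 1 hx).const_mul (1/x))
  have htends : Filter.Tendsto f Filter.atTop (nhds 0) := by
    rw [tendsto_zero_iff_norm_tendsto_zero]
    apply squeeze_zero (fun t => norm_nonneg _)
      (g := fun t => ((1/x) * (Nat.factorial 1 * (4 / x) ^ 1)) * Real.exp (-(x / 16) * t ^ 2))
      _ (tendsto_gauss hx _)
    intro t
    have hb := key_bound 1 hx (by linarith : x / 2 ≤ x) t
    have h1 := abs_sinh_le_cosh t
    have he : (0:ℝ) < Real.exp (-x * Real.cosh t) := Real.exp_pos _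
    rw [hf, Real.norm_eq_abs]
    rw [abs_mul, abs_mul, abs_of_pos he, abs_neg, abs_of_pos (by positivity : (0:ℝ) < 1/x)]
    have h2 : Real.exp (-x * Real.cosh t) * |Real.sinh t|
        ≤ Real.exp (-x * Real.cosh t) * Real.cosh t ^ 1 := by
      rw [pow_one]
      exact mul_le_mul_of_nonneg_left h1 he.le
    calc 1/x * (Real.exp (-x * Real.cosh t) * |Real.sinh t|)
        ≤ 1/x * (Real.exp (-x * Real.cosh t) * Real.cosh t ^ 1) :=
          mul_le_mul_of_nonneg_left h2 (by positivity)
      _ ≤ 1/x * (Nat.factorial 1 * (4 / x) ^ 1 * Real.exp (-(x / 16) * t ^ 2)) :=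
          mul_le_mul_of_nonneg_left hb (by positivity)
      _ = ((1/x) * (Nat.factorial 1 * (4 / x) ^ 1)) * Real.exp (-(x / 16) * t ^ 2) := by ring
  have hint := integral_Ioi_of_hasDerivAt_of_tendsto
    (Continuous.continuousWithinAt (by rw [hf]; fun_prop))
    (fun t _ => hderiv t) f'int htends
  have hf0 : f 0 = 0 := by simp [hf]
  rw [hf0, sub_zero] at hint
  have e1 : ∫ t in Set.Ioi (0:ℝ), f' t
      = (∫ t in Set.Ioi (0:ℝ), (Real.exp (-x * Real.cosh t) * Real.cosh t ^ 2
          - Real.exp (-x * Real.cosh t) * Real.cosh t ^ 0))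
        - ∫ t in Set.Ioi (0:ℝ), (1/x) * (Real.exp (-x * Real.cosh t) * Real.cosh t ^ 1) :=
    integral_sub ((integrable_Kint 2 hx).sub (integrable_Kint 0 hx))
      ((integrable_Kint 1 hx).const_mul (1/x))
  have e2 : (∫ t in Set.Ioi (0:ℝ), (Real.exp (-x * Real.cosh t) * Real.cosh t ^ 2
        - Real.exp (-x * Real.cosh t) * Real.cosh t ^ 0)) = Kint 2 x - Kint 0 x :=
    integral_sub (integrable_Kint 2 hx) (integrable_Kint 0 hx)
  have e3 : (∫ t in Set.Ioi (0:ℝ), (1/x) * (Real.exp (-x * Real.cosh t) * Real.cosh t ^ 1))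
      = (1/x) * Kint 1 x := integral_const_mul _ _
  rw [e1, e2, e3] at hint
  field_simp at hint ⊢
  linarith
lemma K0_eq : K0 = Kint 0 := by
  funext x; unfold K0 Kint; simp

lemma K1_eq : K1 = Kint 1 := by
  funext x; unfold K1 Kint; simp

lemma hasDerivAt_K0 {s : ℝ} (hs : 0 < s) : HasDerivAt K0 (-(K1 s)) s := by
  rw [K0_eq, K1_eq]; exact hasDerivAt_Kint 0 hs

lemma hasDerivAt_K1 {s : ℝ} (hs : 0 < s) : HasDerivAt K1 (-(Kint 2 s)) s := by
  rw [K1_eq]; exact hasDerivAt_Kint 1 hs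

lemma K_ode {s : ℝ} (hs : 0 < s) : Kint 2 s = K0 s + K1 s / s := by
  rw [K0_eq, K1_eq]; exact Kint_ibp hs

lemma dist2_pos {p y : ℝ × ℝ} (h : p ≠ y) : 0 < dist2 p y := by
  unfold dist2
  apply Real.sqrt_pos.2
  by_cases h2 : p.1 = y.1
  · have h3 : p.2 ≠ y.2 := by
      intro h4; exact h (Prod.ext h2 h4)
    have : p.2 - y.2 ≠ 0 := sub_ne_zero.2 h3
    positivity
  · have : p.1 - y.1 ≠ 0 := sub_ne_zero.2 h2
    positivity

lemma dist2_sq {p y : ℝ × ℝ} : dist2 p y ^ 2 = (p.1 - y.1) ^ 2 + (p.2 - y.2) ^ 2 := by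
  unfold dist2
  exact Real.sq_sqrt (by positivity)

lemma hasDerivAt_dist2_fst (y : ℝ × ℝ) {p : ℝ × ℝ} (h : p ≠ y) :
    HasDerivAt (fun t => dist2 (t, p.2) y) ((p.1 - y.1) / dist2 p y) p.1 := by
  have hr := dist2_pos h
  have hu : (p.1 - y.1) ^ 2 + (p.2 - y.2) ^ 2 ≠ 0 := by
    intro h0
    unfold dist2 at hr
    rw [h0] at hr
    simp at hr
  have h1 : HasDerivAt (fun t : ℝ => (t - y.1) ^ 2 + (p.2 - y.2) ^ 2)
      (2 * (p.1 - y.1)) p.1 := by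
    have := (((hasDerivAt_id p.1).sub_const y.1).pow 2).add_const ((p.2 - y.2) ^ 2)
    simpa using this
  have h2 := (Real.hasDerivAt_sqrt hu).comp p.1 h1
  refine h2.congr_deriv (Eq.symm ?_)
  unfold dist2
  field_simp

lemma hasDerivAt_dist2_snd (y : ℝ × ℝ) {p : ℝ × ℝ} (h : p ≠ y) :
    HasDerivAt (fun t => dist2 (p.1, t) y) ((p.2 - y.2) / dist2 p y) p.2 := by
  have hr := dist2_pos h
  have hu : (p.1 - y.1) ^ 2 + (p.2 - y.2) ^ 2 ≠ 0 := by
    intro h0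
    unfold dist2 at hr
    rw [h0] at hr
    simp at hr
  have h1 : HasDerivAt (fun t : ℝ => (p.1 - y.1) ^ 2 + (t - y.2) ^ 2)
      (2 * (p.2 - y.2)) p.2 := by
    have := (((hasDerivAt_id p.2).sub_const y.2).pow 2).const_add ((p.1 - y.1) ^ 2)
    simpa using this
  have h2 := (Real.hasDerivAt_sqrt hu).comp p.2 h1
  refine h2.congr_deriv (Eq.symm ?_)
  unfold dist2
  field_simp

noncomputable def GG1 (lam : ℝ) (y : ℝ × ℝ) (p : ℝ × ℝ) : ℝ :=
  -(1 / (2 * π)) * (-(K1 (lam * dist2 p y)) * (lam * ((p.1 - y.1) / dist2 p y)))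

noncomputable def GG2 (lam : ℝ) (y : ℝ × ℝ) (p : ℝ × ℝ) : ℝ :=
  -(1 / (2 * π)) * (-(K1 (lam * dist2 p y)) * (lam * ((p.2 - y.2) / dist2 p y)))

lemma hasDerivAt_f1 {lam : ℝ} (hlam : 0 < lam) (y : ℝ × ℝ) {p : ℝ × ℝ} (h : p ≠ y) :
    HasDerivAt (fun t => -(1 / (2 * π)) * K0 (lam * dist2 (t, p.2) y))
      (GG1 lam y p) p.1 := by
  have hr := dist2_pos h
  have hs : 0 < lam * dist2 p y := by positivity
  have hin : HasDerivAt (fun t => lam * dist2 (t, p.2) y)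
      (lam * ((p.1 - y.1) / dist2 p y)) p.1 := (hasDerivAt_dist2_fst y h).const_mul lam
  have hK := (hasDerivAt_K0 hs).comp p.1 hin
  exact hK.const_mul (-(1 / (2 * π)))

lemma hasDerivAt_f2 {lam : ℝ} (hlam : 0 < lam) (y : ℝ × ℝ) {p : ℝ × ℝ} (h : p ≠ y) :
    HasDerivAt (fun t => -(1 / (2 * π)) * K0 (lam * dist2 (p.1, t) y))
      (GG2 lam y p) p.2 := by
  have hr := dist2_pos h
  have hs : 0 < lam * dist2 p y := by positivity
  have hin : HasDerivAt (fun t => lam * dist2 (p.1, t) y)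
      (lam * ((p.2 - y.2) / dist2 p y)) p.2 := (hasDerivAt_dist2_snd y h).const_mul lam
  have hK := (hasDerivAt_K0 hs).comp p.2 hin
  exact hK.const_mul (-(1 / (2 * π)))

lemma hasDerivAt_GG1 {lam : ℝ} (hlam : 0 < lam) (y : ℝ × ℝ) {p : ℝ × ℝ} (h : p ≠ y) :
    HasDerivAt (fun t => GG1 lam y (t, p.2))
      (-(1 / (2 * π)) * (lam ^ 2 * Kint 2 (lam * dist2 p y) * (p.1 - y.1) ^ 2 / dist2 p y ^ 2
        - lam * K1 (lam * dist2 p y) * (dist2 p y ^ 2 - (p.1 - y.1) ^ 2) / dist2 p y ^ 3))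
      p.1 := by
  have hr := dist2_pos h
  have hs : 0 < lam * dist2 p y := by positivity
  have hin : HasDerivAt (fun t => lam * dist2 (t, p.2) y)
      (lam * ((p.1 - y.1) / dist2 p y)) p.1 := (hasDerivAt_dist2_fst y h).const_mul lam
  have hA : HasDerivAt (fun t => -(K1 (lam * dist2 (t, p.2) y)))
      (-(-(Kint 2 (lam * dist2 p y)) * (lam * ((p.1 - y.1) / dist2 p y)))) p.1 :=
    by exact ((hasDerivAt_K1 hs).comp p.1 hin).neg
  have hB : HasDerivAt (fun t : ℝ => lam * ((t - y.1) / dist2 (t, p.2) y))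
      (lam * ((1 * dist2 p y - (p.1 - y.1) * ((p.1 - y.1) / dist2 p y)) / dist2 p y ^ 2))
      p.1 := by
    exact (((hasDerivAt_id p.1).sub_const y.1).div (hasDerivAt_dist2_fst y h)
      (ne_of_gt hr)).const_mul lam
  have hAB := (hA.mul hB).const_mul (-(1 / (2 * π)))
  refine hAB.congr_deriv (Eq.symm ?_)
  field_simp
  ring

lemma hasDerivAt_GG2 {lam : ℝ} (hlam : 0 < lam) (y : ℝ × ℝ) {p : ℝ × ℝ} (h : p ≠ y) :
    HasDerivAt (fun t => GG2 lam y (p.1, t))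
      (-(1 / (2 * π)) * (lam ^ 2 * Kint 2 (lam * dist2 p y) * (p.2 - y.2) ^ 2 / dist2 p y ^ 2
        - lam * K1 (lam * dist2 p y) * (dist2 p y ^ 2 - (p.2 - y.2) ^ 2) / dist2 p y ^ 3))
      p.2 := by
  have hr := dist2_pos h
  have hs : 0 < lam * dist2 p y := by positivity
  have hin : HasDerivAt (fun t => lam * dist2 (p.1, t) y)
      (lam * ((p.2 - y.2) / dist2 p y)) p.2 := (hasDerivAt_dist2_snd y h).const_mul lam
  have hA : HasDerivAt (fun t => -(K1 (lam * dist2 (p.1, t) y)))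
      (-(-(Kint 2 (lam * dist2 p y)) * (lam * ((p.2 - y.2) / dist2 p y)))) p.2 :=
    by exact ((hasDerivAt_K1 hs).comp p.2 hin).neg
  have hB : HasDerivAt (fun t : ℝ => lam * ((t - y.2) / dist2 (p.1, t) y))
      (lam * ((1 * dist2 p y - (p.2 - y.2) * ((p.2 - y.2) / dist2 p y)) / dist2 p y ^ 2))
      p.2 := by
    exact (((hasDerivAt_id p.2).sub_const y.2).div (hasDerivAt_dist2_snd y h)
      (ne_of_gt hr)).const_mul lam
  have hAB := (hA.mul hB).const_mul (-(1 / (2 * π)))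
  refine hAB.congr_deriv (Eq.symm ?_)
  field_simp
  ring

lemma alg (c0 K0v K1v Kv a b r lam : ℝ) (hr : r ≠ 0) (hl : lam ≠ 0)
    (hK : Kv = K0v + K1v / (lam * r)) (hab : a ^ 2 + b ^ 2 = r ^ 2) :
    c0 * (lam ^ 2 * Kv * a ^ 2 / r ^ 2 - lam * K1v * (r ^ 2 - a ^ 2) / r ^ 3)
      + c0 * (lam ^ 2 * Kv * b ^ 2 / r ^ 2 - lam * K1v * (r ^ 2 - b ^ 2) / r ^ 3)
      - lam ^ 2 * (c0 * K0v) = 0 := by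
  subst hK
  have hb : b ^ 2 = r ^ 2 - a ^ 2 := by linarith
  rw [hb]
  field_simp
  ring

/-- The Yukawa Green's function `G(x,y) = -(1/(2π)) K₀(λ‖x-y‖)` satisfies
`(Δₓ - λ²) G(x,y) = 0` for `x ≠ y`. -/
theorem stmt2 (lam : ℝ) (hlam : 0 < lam) (x y : ℝ × ℝ) (hxy : x ≠ y) :
    lap (fun x' => -(1 / (2 * π)) * K0 (lam * dist2 x' y)) x
      - lam ^ 2 * (-(1 / (2 * π)) * K0 (lam * dist2 x y)) = 0 := by
  set f : ℝ × ℝ → ℝ := fun x' => -(1 / (2 * π)) * K0 (lam * dist2 x' y) with hfdef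
  have hr := dist2_pos hxy
  have hs : 0 < lam * dist2 x y := by positivity
  -- first partial derivatives agree with GG1/GG2 off the singularity
  have pd1_eq : ∀ {p : ℝ × ℝ}, p ≠ y → pd1 f p = GG1 lam y p := fun {p} h =>
    (hasDerivAt_f1 hlam y h).deriv
  have pd2_eq : ∀ {p : ℝ × ℝ}, p ≠ y → pd2 f p = GG2 lam y p := fun {p} h =>
    (hasDerivAt_f2 hlam y h).deriv
  -- eventual equality along the horizontal line
  have ev1 : ∀ᶠ t in nhds x.1, (t, x.2) ≠ y := by
    by_cases h2 : x.2 = y.2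
    · have h1 : x.1 ≠ y.1 := fun he => hxy (Prod.ext he h2)
      exact (eventually_ne_nhds h1).mono fun t ht hc => ht (congrArg Prod.fst hc)
    · exact Filter.Eventually.of_forall fun t hc => h2 (show x.2 = y.2 by rw [← hc])
  have ev2 : ∀ᶠ t in nhds x.2, (x.1, t) ≠ y := by
    by_cases h2 : x.1 = y.1
    · have h1 : x.2 ≠ y.2 := fun he => hxy (Prod.ext h2 he)
      exact (eventually_ne_nhds h1).mono fun t ht hc => ht (congrArg Prod.snd hc)
    · exact Filter.Eventually.of_forall fun t hc => h2 (show x.1 = y.1 by rw [← hc])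
  have hev1 : (fun t => pd1 f (t, x.2)) =ᶠ[nhds x.1] (fun t => GG1 lam y (t, x.2)) :=
    ev1.mono fun t ht => pd1_eq ht
  have hev2 : (fun t => pd2 f (x.1, t)) =ᶠ[nhds x.2] (fun t => GG2 lam y (x.1, t)) :=
    ev2.mono fun t ht => pd2_eq ht
  have h11 : pd1 (pd1 f) x
      = -(1 / (2 * π)) * (lam ^ 2 * Kint 2 (lam * dist2 x y) * (x.1 - y.1) ^ 2 / dist2 x y ^ 2
        - lam * K1 (lam * dist2 x y) * (dist2 x y ^ 2 - (x.1 - y.1) ^ 2) / dist2 x y ^ 3) := by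
    show deriv (fun t => pd1 f (t, x.2)) x.1 = _
    rw [hev1.deriv_eq]
    exact (hasDerivAt_GG1 hlam y hxy).deriv
  have h22 : pd2 (pd2 f) x
      = -(1 / (2 * π)) * (lam ^ 2 * Kint 2 (lam * dist2 x y) * (x.2 - y.2) ^ 2 / dist2 x y ^ 2
        - lam * K1 (lam * dist2 x y) * (dist2 x y ^ 2 - (x.2 - y.2) ^ 2) / dist2 x y ^ 3) := by
    show deriv (fun t => pd2 f (x.1, t)) x.2 = _
    rw [hev2.deriv_eq]
    exact (hasDerivAt_GG2 hlam y hxy).deriv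
  have hK := K_ode hs
  have hab : (x.1 - y.1) ^ 2 + (x.2 - y.2) ^ 2 = dist2 x y ^ 2 := dist2_sq.symm
  show pd1 (pd1 f) x + pd2 (pd2 f) x - lam ^ 2 * (-(1 / (2 * π)) * K0 (lam * dist2 x y)) = 0
  rw [h11, h22]
  exact alg (-(1 / (2 * π))) (K0 (lam * dist2 x y)) (K1 (lam * dist2 x y))
    (Kint 2 (lam * dist2 x y)) (x.1 - y.1) (x.2 - y.2) (dist2 x y) lam
    (ne_of_gt hr) (ne_of_gt hlam) hK hab
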